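/- arXiv:2302.01202 — 4 statements merged into one kernel-verified Lean document; each statement's English description precedes it below -/
import Mathlib

section
/- Every torsion-free nilpotent group Γ is locally indicable: every nontrivial finitely generated subgroup of Γ admits a surjective group homomorphism onto ℤ. -/
open Function
open scoped commutatorElement

/-- A group is locally indicable if every nontrivial finitely generated subgroup admits a
degree map, i.e. a surjective group homomorphism onto `ℤ`. -/
def LocallyIndicable (Γ : Type*) [Group Γ] : Prop :=
  ∀ H : Subgroup Γ, H.FG → H ≠ ⊥ →
    ∃ φ : H → ℤ, (∀ x y : H, φ (x * y) = φ x + φ y) ∧ Surjective φ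

/-- Mal'cev: in a torsion-free nilpotent group, if `x ^ n` commutes with `g` then so does `x`. -/
lemma commute_of_pow_commute {G : Type*} [Group G] [Group.IsNilpotent G]
    (htf : ∀ γ : G, ∀ n : ℕ, 0 < n → γ ^ n = 1 → γ = 1)
    {x g : G} {n : ℕ} (hn : 0 < n) (h : Commute (x ^ n) g) : Commute x g := by
  -- iterated commutators
  let f : ℕ → G := fun i => Nat.rec g (fun _ y => ⁅x, y⁆) i
  have hf0 : f 0 = g := rfl
  have hfs : ∀ i, f (i + 1) = ⁅x, f i⁆ := fun i => rfl
  -- `x ^ n` commutes with every `f i`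
  have hA : ∀ i, Commute (x ^ n) (f i) := by
    intro i
    induction i with
    | zero => exact h
    | succ i ih =>
      rw [hfs, commutatorElement_def]
      have hx : Commute (x ^ n) x := (Commute.refl x).pow_left n
      exact ((hx.mul_right ih).mul_right hx.inv_right).mul_right ih.inv_right
  -- `f i` lies in the lower central series
  have hB : ∀ i, f i ∈ Subgroup.lowerCentralSeries (⊤ : Subgroup G) i := by
    intro i
    induction i with
    | zero => exact Subgroup.mem_top g
    | succ i ih =>
      rw [hfs]
      have hmem : ⁅f i, x⁆ ∈ Subgroup.lowerCentralSeries (⊤ : Subgroup G) (i + 1) := by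
        rw [Subgroup.mem_lowerCentralSeries_succ_iff]
        exact Subgroup.subset_closure ⟨f i, ih, x, Subgroup.mem_top x, rfl⟩
      have heq : ⁅x, f i⁆ = ⁅f i, x⁆⁻¹ := by
        rw [commutatorElement_def, commutatorElement_def]; group
      rw [heq]
      exact inv_mem hmem
  -- descending step
  have hStep : ∀ i, f (i + 1 + 1) = 1 → f (i + 1) = 1 := by
    intro i h1
    have hcomm : Commute x (f (i + 1)) := by
      have h1' : ⁅x, f (i + 1)⁆ = 1 := (hfs (i + 1)) ▸ h1
      exact commutatorElement_eq_one_iff_commute.mp h1'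
    -- telescoping: x ^ m * f i * x ^ (-m) = f (i+1) ^ m * f i
    have key : ∀ m : ℕ, x ^ m * f i * (x ^ m)⁻¹ = f (i + 1) ^ m * f i := by
      intro m
      induction m with
      | zero => simp
      | succ m ih =>
        have hconj : x * f i * x⁻¹ = f (i + 1) * f i := by
          rw [hfs, commutatorElement_def]
          group
        calc x ^ (m + 1) * f i * (x ^ (m + 1))⁻¹
            = x ^ m * (x * f i * x⁻¹) * (x ^ m)⁻¹ := by
              rw [pow_succ]; group
          _ = x ^ m * (f (i + 1) * f i) * (x ^ m)⁻¹ := by rw [hconj]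
          _ = (x ^ m * f (i + 1) * (x ^ m)⁻¹) * (x ^ m * f i * (x ^ m)⁻¹) := by group
          _ = f (i + 1) * (f (i + 1) ^ m * f i) := by
              rw [(hcomm.pow_left m).eq]; rw [ih]; group
          _ = f (i + 1) ^ (m + 1) * f i := by rw [pow_succ']; group
    have h2 : x ^ n * f i * (x ^ n)⁻¹ = f i := by
      rw [(hA i).eq]; group
    have h3 : f (i + 1) ^ n * f i = f i := by rw [← key, h2]
    have h4 : f (i + 1) ^ n = 1 := by
      have h3' : f (i + 1) ^ n * f i = 1 * f i := by rw [h3, one_mul]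
      exact mul_right_cancel h3'
    exact htf _ n hn h4
  -- descend from the top of the lower central series
  have hDown : ∀ m i, f (i + 1 + m) = 1 → f (i + 1) = 1 := by
    intro m
    induction m with
    | zero => intro i h1; simpa using h1
    | succ m ih =>
      intro i h1
      have : f (i + 1 + 1 + m) = 1 := by
        have : i + 1 + (m + 1) = i + 1 + 1 + m := by omega
        rwa [this] at h1
      exact hStep i (ih (i + 1) this)
  obtain ⟨c, hc⟩ := Subgroup.nilpotent_iff_lowerCentralSeries.mp ‹Group.IsNilpotent G›
  have htop : f (0 + 1 + c) = 1 := by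
    have : f (0 + 1 + c) ∈ Subgroup.lowerCentralSeries (⊤ : Subgroup G) (0 + 1 + c) := hB _
    have hle : Subgroup.lowerCentralSeries (⊤ : Subgroup G) (0 + 1 + c) ≤ Subgroup.lowerCentralSeries (⊤ : Subgroup G) c :=
      Subgroup.lowerCentralSeries_antitone ⊤ (by omega)
    have : f (0 + 1 + c) ∈ (⊥ : Subgroup G) := by rw [← hc]; exact hle this
    simpa using this
  have h1 : f 1 = 1 := hDown c 0 htop
  have hxg : ⁅x, g⁆ = 1 := h1
  exact commutatorElement_eq_one_iff_commute.mp hxg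

/-- A nontrivial finitely generated torsion-free commutative group surjects onto `ℤ`. -/
lemma surj_int_of_comm {A : Type*} [CommGroup A] [Nontrivial A] (hfg : Group.FG A)
    (htf : ∀ γ : A, ∀ n : ℕ, 0 < n → γ ^ n = 1 → γ = 1) :
    ∃ φ : A → ℤ, (∀ x y : A, φ (x * y) = φ x + φ y) ∧ Surjective φ := by
  letI M := Additive A
  haveI : AddGroup.FG M := GroupFG.iff_add_fg.mp hfg
  haveI : Module.Finite ℤ M := Module.Finite.iff_addGroup_fg.mpr ‹_›
  haveI : NoZeroSMulDivisors ℤ M := by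
    refine ⟨fun {c} {y} hcy => ?_⟩
    by_cases hc : c = 0
    · exact Or.inl hc
    · refine Or.inr ?_
      have hz : (Additive.toMul y) ^ c = 1 := by
        have := congrArg Additive.toMul hcy
        exact this
      have hz' : (Additive.toMul y) ^ (c.natAbs : ℤ) = 1 := by
        rcases Int.natAbs_eq c with hh | hh
        · rw [← hh, hz]
        · rw [← neg_neg (c.natAbs : ℤ), ← hh, zpow_neg, hz, inv_one]
      rw [zpow_natCast] at hz'
      have := htf _ c.natAbs (Int.natAbs_pos.mpr hc) hz'
      simpa using congrArg Additive.ofMul this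
  haveI : Module.Free ℤ M := Module.free_of_finite_type_torsion_free'
  let b := Module.Free.chooseBasis ℤ M
  haveI : Nontrivial M := ‹Nontrivial A›
  obtain ⟨i⟩ := b.index_nonempty
  refine ⟨fun a => b.coord i (Additive.ofMul a), fun x y => ?_, fun z => ?_⟩
  · simpa using map_add (b.coord i) (Additive.ofMul x) (Additive.ofMul y)
  · refine ⟨Additive.toMul (z • b i), ?_⟩
    simp [Module.Basis.coord_apply]

/-- Key induction: groups with upper central series terminating at `⊤` in `n` steps. -/
lemma aux_locallyIndicable : ∀ (n : ℕ) (G : Type u) [Group G],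
    Subgroup.upperCentralSeries G n = ⊤ →
    (∀ γ : G, ∀ m : ℕ, 0 < m → γ ^ m = 1 → γ = 1) →
    ∀ H : Subgroup G, H.FG → H ≠ ⊥ →
      ∃ φ : H → ℤ, (∀ x y : H, φ (x * y) = φ x + φ y) ∧ Surjective φ := by
  intro n
  induction n with
  | zero =>
    intro G _ hucs _ H _ hne
    exact absurd (le_bot_iff.mp (hucs ▸ le_top : H ≤ Subgroup.upperCentralSeries G 0)) hne
  | succ n ih =>
    intro G _ hucs htf H hfg hne
    haveI hnil : Group.IsNilpotent G := ⟨⟨n + 1, hucs⟩⟩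
    set Z := Subgroup.center G with hZ
    let Q := G ⧸ Z
    let f : G →* Q := QuotientGroup.mk' Z
    -- the quotient has shorter upper central series
    have hQucs : Subgroup.upperCentralSeries Q n = ⊤ := by
      have hcomap := comap_upperCentralSeries_quotient_center (G := G) n
      rw [hucs] at hcomap
      rw [Subgroup.eq_top_iff']
      intro q
      obtain ⟨g, rfl⟩ := QuotientGroup.mk'_surjective Z q
      have : g ∈ Subgroup.comap (QuotientGroup.mk' Z) (Subgroup.upperCentralSeries Q n) := by
        rw [hcomap]; trivial
      exact this
    -- the quotient is torsion-free
    have hQtf : ∀ γ : Q, ∀ m : ℕ, 0 < m → γ ^ m = 1 → γ = 1 := by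
      intro q m hm hq
      obtain ⟨g, rfl⟩ := QuotientGroup.mk'_surjective Z q
      have hg : g ^ m ∈ Z := by
        refine (QuotientGroup.eq_one_iff (g ^ m)).mp ?_
        rw [← map_pow] at hq
        exact hq
      have hcen : g ∈ Subgroup.center G := by
        rw [Subgroup.mem_center_iff]
        intro y
        have hcm : Commute (g ^ m) y := (Subgroup.mem_center_iff.mp hg y).symm
        exact (commute_of_pow_commute htf hm hcm).symm.eq
      show QuotientGroup.mk' Z g = 1
      rw [← MonoidHom.mem_ker, QuotientGroup.ker_mk']
      exact hcen
    let K : Subgroup Q := H.map f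
    have hKfg : K.FG := by
      haveI hHfg : Group.FG H := (Group.fg_iff_subgroup_fg H).mpr hfg
      haveI : Group.FG K :=
        Group.fg_of_surjective (f := f.subgroupMap H) (f.subgroupMap_surjective H)
      exact (Group.fg_iff_subgroup_fg K).mp ‹_›
    by_cases hK : K = ⊥
    · -- H is contained in the center, hence abelian
      have hle : H ≤ Subgroup.center G := by
        intro x hx
        have : f x ∈ K := Subgroup.mem_map_of_mem f hx
        rw [hK, Subgroup.mem_bot] at this
        have hker : x ∈ (QuotientGroup.mk' Z).ker := by rwa [MonoidHom.mem_ker]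
        rwa [QuotientGroup.ker_mk'] at hker
      letI : CommGroup H :=
        { (inferInstance : Group H) with
          mul_comm := fun a b => Subtype.ext
            (Subgroup.mem_center_iff.mp (hle a.2) b.1).symm }
      haveI : Nontrivial H := H.nontrivial_iff_ne_bot.mpr hne
      have hHtf : ∀ γ : H, ∀ m : ℕ, 0 < m → γ ^ m = 1 → γ = 1 := by
        intro γ m hm hγ
        refine Subtype.ext (htf γ.1 m hm ?_)
        simpa using congrArg Subtype.val hγ
      exact surj_int_of_comm ((Group.fg_iff_subgroup_fg H).mpr hfg) hHtf
    · -- use the inductive hypothesis on the quotient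
      obtain ⟨ψ, hadd, hsurj⟩ := ih Q hQucs hQtf K hKfg hK
      refine ⟨fun x => ψ (f.subgroupMap H x), fun x y => ?_, ?_⟩
      · show ψ ((f.subgroupMap H) (x * y)) = ψ ((f.subgroupMap H) x) + ψ ((f.subgroupMap H) y)
        rw [map_mul, hadd]
      · exact hsurj.comp (f.subgroupMap_surjective H)

/-- every torsion-free nilpotent group is locally indicable. -/
theorem locallyIndicable_of_torsionFree_nilpotent {Γ : Type*} [Group Γ]
    [Group.IsNilpotent Γ]
    (htf : ∀ γ : Γ, ∀ n : ℕ, 0 < n → γ ^ n = 1 → γ = 1) :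
    LocallyIndicable Γ := by
  obtain ⟨n, hn⟩ := Group.IsNilpotent.nilpotent Γ
  exact aux_locallyIndicable n Γ hn htf
end

section
/- Let Γ be a torsion-free nilpotent group and σ a 2-cocycle on Γ. Then the twisted group ring ℂ(Γ,σ) contains no nontrivial zero divisors: for all finitely supported nonzero a, b : Γ → ℂ, the twisted convolution a *_σ b is nonzero. -/
open Function
open scoped commutatorElement

/-- The `σ`-twisted convolution of two (finitely supported) functions `a b : Γ → ℂ`. -/
noncomputable def twConv {Γ : Type*} [Group Γ] (σ : Γ → Γ → ℂ) (a b : Γ → ℂ) : Γ → ℂ :=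
  fun γ' => ∑ᶠ γ, σ γ (γ⁻¹ * γ') * a γ * b (γ⁻¹ * γ')

/-- A 2-cocycle on a group `Γ`: unimodular values, cocycle identity, normalization. -/
def IsTwoCocycle {Γ : Type*} [Group Γ] (σ : Γ → Γ → ℂ) : Prop :=
  (∀ x y, ‖σ x y‖ = 1) ∧
    (∀ x y z, σ x y * σ (x * y) z = σ x (y * z) * σ y z) ∧ σ 1 1 = 1



section Malcev

variable {G : Type*} [Group G]

lemma comm_pow_of_central (x g : G)
    (hc : ∀ q : G, Commute (x*g*x⁻¹*g⁻¹) q) :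
    ∀ n : ℕ, x^n * g * (x^n)⁻¹ * g⁻¹ = (x*g*x⁻¹*g⁻¹)^n
  | 0 => by simp
  | n+1 => by
    have ih := comm_pow_of_central x g hc n
    have h1 : x^(n+1) * g * (x^(n+1))⁻¹ * g⁻¹
        = x * (x^n * g * (x^n)⁻¹ * g⁻¹) * (g * x⁻¹ * g⁻¹) := by
      group
    rw [h1, ih]
    have h2 : x * (x*g*x⁻¹*g⁻¹)^n = (x*g*x⁻¹*g⁻¹)^n * x := ((hc x).pow_left n).symm
    rw [← mul_assoc, h2, pow_succ]
    group

lemma ucs_step (htf : ∀ γ : G, ∀ n : ℕ, 0 < n → γ ^ n = 1 → γ = 1) :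
    ∀ i : ℕ, ∀ x : G, ∀ n : ℕ, 0 < n →
      x ∈ Subgroup.upperCentralSeries G (i+1) → x ^ n ∈ Subgroup.upperCentralSeries G i →
      x ∈ Subgroup.upperCentralSeries G i := by
  intro i
  induction i with
  | zero =>
    intro x n hn _ hxn
    rw [upperCentralSeries_zero, Subgroup.mem_bot] at hxn ⊢
    exact htf x n hn hxn
  | succ i ih =>
    intro x n hn hx1 hxn
    rw [mem_upperCentralSeries_succ_iff]
    intro g
    have hc1 : x*g*x⁻¹*g⁻¹ ∈ Subgroup.upperCentralSeries G (i+1) :=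
      mem_upperCentralSeries_succ_iff.mp hx1 g
    refine ih _ n hn hc1 ?_
    set N := Subgroup.upperCentralSeries G i with hNdef
    haveI : N.Normal := inferInstance
    have key : (((x*g*x⁻¹*g⁻¹ : G) : G ⧸ N))^n = 1 := by
      have hcen : ∀ q' : G ⧸ N,
          Commute ((x : G ⧸ N) * g * (x : G ⧸ N)⁻¹ * (g : G ⧸ N)⁻¹) q' := by
        intro q'
        induction q' using QuotientGroup.induction_on with
        | H q =>
          rw [← commutatorElement_eq_one_iff_commute]
          have hmem : (x*g*x⁻¹*g⁻¹) * q * (x*g*x⁻¹*g⁻¹)⁻¹ * q⁻¹ ∈ N :=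
            mem_upperCentralSeries_succ_iff.mp hc1 q
          have : ((((x*g*x⁻¹*g⁻¹) * q * (x*g*x⁻¹*g⁻¹)⁻¹ * q⁻¹ : G)) : G ⧸ N) = 1 :=
            (QuotientGroup.eq_one_iff _).mpr hmem
          calc ⁅(x : G ⧸ N) * g * (x : G ⧸ N)⁻¹ * (g : G ⧸ N)⁻¹, (q : G ⧸ N)⁆
              = (((x*g*x⁻¹*g⁻¹) * q * (x*g*x⁻¹*g⁻¹)⁻¹ * q⁻¹ : G) : G ⧸ N) := by
                simp [commutatorElement_def]
            _ = 1 := this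
      have h2 := comm_pow_of_central ((x : G ⧸ N)) ((g : G ⧸ N)) hcen n
      have h3 : ((x : G ⧸ N))^n * g * (((x : G ⧸ N))^n)⁻¹ * (g : G ⧸ N)⁻¹ = 1 := by
        have hmem : (x^n)*g*(x^n)⁻¹*g⁻¹ ∈ N :=
          mem_upperCentralSeries_succ_iff.mp hxn g
        have : (((x^n)*g*(x^n)⁻¹*g⁻¹ : G) : G ⧸ N) = 1 :=
          (QuotientGroup.eq_one_iff _).mpr hmem
        simpa using this
      rw [h2] at h3
      simpa using h3
    rw [← QuotientGroup.eq_one_iff (G := G) (N := N)]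
    simpa [commutatorElement_def] using key

lemma ucs_isolated [Group.IsNilpotent G]
    (htf : ∀ γ : G, ∀ n : ℕ, 0 < n → γ ^ n = 1 → γ = 1)
    (i : ℕ) (x : G) (n : ℕ) (hn : 0 < n)
    (h : x ^ n ∈ Subgroup.upperCentralSeries G i) : x ∈ Subgroup.upperCentralSeries G i := by
  obtain ⟨c, hc⟩ := Group.IsNilpotent.nilpotent (G := G)
  have hx : x ∈ Subgroup.upperCentralSeries G (i + c) := by
    have : Subgroup.upperCentralSeries G c ≤ Subgroup.upperCentralSeries G (i + c) :=
      upperCentralSeries_mono G (Nat.le_add_left c i)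
    exact this (hc ▸ Subgroup.mem_top x)
  clear hc
  induction c with
  | zero => simpa using hx
  | succ c ihc =>
    by_cases hmem : x ∈ Subgroup.upperCentralSeries G (i + c)
    · exact ihc hmem
    · have hxn : x ^ n ∈ Subgroup.upperCentralSeries G (i + c) :=
        upperCentralSeries_mono G (Nat.le_add_right i c) h
      have := ucs_step htf (i + c) x n hn hx hxn
      exact ihc this

lemma quotient_center_tf [Group.IsNilpotent G]
    (htf : ∀ γ : G, ∀ n : ℕ, 0 < n → γ ^ n = 1 → γ = 1) :
    ∀ q : G ⧸ Subgroup.center G, ∀ n : ℕ, 0 < n → q ^ n = 1 → q = 1 := by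
  intro q n hn hq
  induction q using QuotientGroup.induction_on with
  | H x =>
    have hx : x ^ n ∈ Subgroup.center G := by
      rw [← QuotientGroup.eq_one_iff (G := G) (N := Subgroup.center G)]
      simpa using hq
    have : x ^ n ∈ Subgroup.upperCentralSeries G 1 := by rwa [upperCentralSeries_one]
    have hx1 : x ∈ Subgroup.upperCentralSeries G 1 := ucs_isolated htf 1 x n hn this
    rw [upperCentralSeries_one] at hx1
    exact (QuotientGroup.eq_one_iff _).mpr hx1

end Malcev



section Abelian

/-- A torsion-free abelian group has unique sums. -/
theorem uniqueSums_of_tf {A : Type*} [AddCommGroup A]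
    (htf : ∀ a : A, ∀ n : ℕ, 0 < n → n • a = 0 → a = 0) : UniqueSums A := by
  constructor
  intro S T hS hT
  classical
  -- the (finitely generated) subgroup generated by S ∪ T
  set H : AddSubgroup A := AddSubgroup.closure (↑(S ∪ T) : Set A) with hHdef
  haveI hfg : AddGroup.FG H := by
    rw [AddGroup.fg_iff_addSubgroup_fg]
    exact (AddSubgroup.fg_iff H).mpr ⟨(↑(S ∪ T) : Set A), rfl, (S ∪ T).finite_toSet⟩
  haveI : Module.Finite ℤ H := Module.Finite.iff_addGroup_fg.mpr hfg
  haveI : NoZeroSMulDivisors ℤ H := by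
    constructor
    intro c x hcx
    rcases eq_or_ne c 0 with rfl | hc
    · exact Or.inl rfl
    · refine Or.inr ?_
      have h0 : c • (x : A) = 0 := by
        have : ((c • x : H) : A) = c • (x : A) := rfl
        rw [← this, hcx]; rfl
      have hx : (c.natAbs : ℤ) • (x : A) = 0 := by
        rcases Int.natAbs_eq c with h | h
        · rw [← h]; exact h0
        · rw [h, neg_smul] at h0; exact neg_eq_zero.mp h0
      have hx0 : (c.natAbs) • (x : A) = 0 := by rwa [natCast_zsmul] at hx
      have : (x : A) = 0 := htf _ c.natAbs (Int.natAbs_pos.mpr hc) hx0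
      exact Subtype.ext (by simpa using this)
  haveI : Module.Free ℤ H := Module.free_of_finite_type_torsion_free'
  -- H is a finite free ℤ-module, hence has unique sums
  haveI hU : UniqueSums H := by
    let b := Module.Free.chooseBasis ℤ H
    exact UniqueSums.of_injective_addHom
      (b.repr.toLinearMap.toAddMonoidHom.toAddHom) b.repr.injective inferInstance
  -- transfer to `S T`
  have hsub : ∀ x ∈ S ∪ T, x ∈ H := fun x hx => AddSubgroup.subset_closure hx
  set S' : Finset H := (S.attach).image
    (fun x => (⟨x.1, hsub x.1 (Finset.mem_union_left T x.2)⟩ : H)) with hS'def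
  set T' : Finset H := (T.attach).image
    (fun x => (⟨x.1, hsub x.1 (Finset.mem_union_right S x.2)⟩ : H)) with hT'def
  have hS' : S'.Nonempty := hS.attach.image _
  have hT' : T'.Nonempty := hT.attach.image _
  obtain ⟨a0, ha0, b0, hb0, hu⟩ := hU.uniqueAdd_of_nonempty hS' hT'
  simp only [hS'def, Finset.mem_image, Finset.mem_attach, true_and, Subtype.exists] at ha0
  obtain ⟨a1, ha1, ha1e⟩ := ha0
  simp only [hT'def, Finset.mem_image, Finset.mem_attach, true_and, Subtype.exists] at hb0
  obtain ⟨b1, hb1, hb1e⟩ := hb0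
  refine ⟨a1, ha1, b1, hb1, ?_⟩
  intro a b ha hb hab
  have haH : a ∈ H := hsub a (Finset.mem_union_left T ha)
  have hbH : b ∈ H := hsub b (Finset.mem_union_right S hb)
  have h1 : (⟨a, haH⟩ : H) ∈ S' := by
    simp only [hS'def, Finset.mem_image, Finset.mem_attach, true_and, Subtype.exists]
    exact ⟨a, ha, rfl⟩
  have h2 : (⟨b, hbH⟩ : H) ∈ T' := by
    simp only [hT'def, Finset.mem_image, Finset.mem_attach, true_and, Subtype.exists]
    exact ⟨b, hb, rfl⟩
  have h3 : (⟨a, haH⟩ : H) + ⟨b, hbH⟩ = a0 + b0 := by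
    rw [← ha1e, ← hb1e]
    exact Subtype.ext (by simpa using hab)
  obtain ⟨e1, e2⟩ := hu h1 h2 h3
  constructor
  · have := congrArg (fun z : H => (z : A)) (e1.trans ha1e.symm); simpa using this
  · have := congrArg (fun z : H => (z : A)) (e2.trans hb1e.symm); simpa using this

/-- A torsion-free commutative (multiplicative) group has unique products. -/
theorem uniqueProds_of_tf_comm {G : Type*} [CommGroup G]
    (htf : ∀ γ : G, ∀ n : ℕ, 0 < n → γ ^ n = 1 → γ = 1) : UniqueProds G := by
  haveI : UniqueSums (Additive G) := by
    apply uniqueSums_of_tf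
    intro a n hn han
    exact htf (Additive.toMul a) n hn han
  exact UniqueProds.of_injective_mulHom
    (MulEquiv.multiplicativeAdditive G).symm.toMulHom
    (MulEquiv.multiplicativeAdditive G).symm.injective inferInstance

end Abelian



section Extension

/-- Unique products are preserved by group extensions. -/
theorem uniqueProds_of_normal {G : Type*} [Group G] (N : Subgroup G) [N.Normal]
    (hN : UniqueProds N) (hQ : UniqueProds (G ⧸ N)) : UniqueProds G := by
  constructor
  intro A B hA hB
  classical
  set π : G →* G ⧸ N := QuotientGroup.mk' N with hπ
  obtain ⟨qa, hqa, qb, hqb, hq⟩ := hQ.uniqueMul_of_nonempty (hA.image π) (hB.image π)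
  obtain ⟨α, hα, rfl⟩ := Finset.mem_image.mp hqa
  obtain ⟨β, hβ, rfl⟩ := Finset.mem_image.mp hqb
  -- restrict to the fibers over π α, π β
  set A' : Finset G := A.filter (fun x => π x = π α) with hA'def
  set B' : Finset G := B.filter (fun x => π x = π β) with hB'def
  -- translate fibers into N
  have hCmem : ∀ x ∈ A', α⁻¹ * x ∈ N := by
    intro x hx
    rw [hA'def, Finset.mem_filter] at hx
    have : π (α⁻¹ * x) = 1 := by rw [map_mul, map_inv, hx.2, inv_mul_cancel]
    exact (QuotientGroup.eq_one_iff _).mp this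
  have hDmem : ∀ x ∈ B', x * β⁻¹ ∈ N := by
    intro x hx
    rw [hB'def, Finset.mem_filter] at hx
    have : π (x * β⁻¹) = 1 := by rw [map_mul, map_inv, hx.2, mul_inv_cancel]
    exact (QuotientGroup.eq_one_iff _).mp this
  set C : Finset N := (A'.attach).image
    (fun x => (⟨α⁻¹ * x.1, hCmem x.1 x.2⟩ : N)) with hCdef
  set D : Finset N := (B'.attach).image
    (fun x => (⟨x.1 * β⁻¹, hDmem x.1 x.2⟩ : N)) with hDdef
  have hαA' : α ∈ A' := by rw [hA'def, Finset.mem_filter]; exact ⟨hα, rfl⟩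
  have hβB' : β ∈ B' := by rw [hB'def, Finset.mem_filter]; exact ⟨hβ, rfl⟩
  have hC : C.Nonempty := (Finset.attach_nonempty_iff.mpr ⟨α, hαA'⟩).image _
  have hD : D.Nonempty := (Finset.attach_nonempty_iff.mpr ⟨β, hβB'⟩).image _
  obtain ⟨c0, hc0, d0, hd0, hu⟩ := hN.uniqueMul_of_nonempty hC hD
  rw [hCdef, Finset.mem_image] at hc0
  obtain ⟨⟨a0, ha0A'⟩, -, hc0e⟩ := hc0
  rw [hDdef, Finset.mem_image] at hd0
  obtain ⟨⟨b0, hb0B'⟩, -, hd0e⟩ := hd0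
  have ha0A : a0 ∈ A := (Finset.mem_filter.mp ha0A').1
  have hb0B : b0 ∈ B := (Finset.mem_filter.mp hb0B').1
  refine ⟨a0, ha0A, b0, hb0B, ?_⟩
  intro a b ha hb hab
  -- first, a and b lie in the fibers
  have hπa0 : π a0 = π α := (Finset.mem_filter.mp ha0A').2
  have hπb0 : π b0 = π β := (Finset.mem_filter.mp hb0B').2
  have hπab : π a * π b = π α * π β := by
    rw [← map_mul, hab, map_mul, hπa0, hπb0]
  obtain ⟨hπa, hπb⟩ := hq (Finset.mem_image_of_mem π ha) (Finset.mem_image_of_mem π hb) hπab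
  have haA' : a ∈ A' := by rw [hA'def, Finset.mem_filter]; exact ⟨ha, hπa⟩
  have hbB' : b ∈ B' := by rw [hB'def, Finset.mem_filter]; exact ⟨hb, hπb⟩
  -- now use uniqueness in N
  have hcC : (⟨α⁻¹ * a, hCmem a haA'⟩ : N) ∈ C := by
    rw [hCdef, Finset.mem_image]
    exact ⟨⟨a, haA'⟩, Finset.mem_attach _ _, rfl⟩
  have hdD : (⟨b * β⁻¹, hDmem b hbB'⟩ : N) ∈ D := by
    rw [hDdef, Finset.mem_image]
    exact ⟨⟨b, hbB'⟩, Finset.mem_attach _ _, rfl⟩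
  have hprod : (⟨α⁻¹ * a, hCmem a haA'⟩ : N) * ⟨b * β⁻¹, hDmem b hbB'⟩ = c0 * d0 := by
    rw [← hc0e, ← hd0e]
    apply Subtype.ext
    show α⁻¹ * a * (b * β⁻¹) = α⁻¹ * a0 * (b0 * β⁻¹)
    rw [mul_assoc, ← mul_assoc a, hab, mul_assoc α⁻¹, ← mul_assoc a0]
  obtain ⟨e1, e2⟩ := hu hcC hdD hprod
  rw [← hc0e] at e1
  rw [← hd0e] at e2
  have e1' : α⁻¹ * a = α⁻¹ * a0 := congrArg Subtype.val e1
  have e2' : b * β⁻¹ = b0 * β⁻¹ := congrArg Subtype.val e2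
  exact ⟨mul_left_cancel e1', mul_right_cancel e2'⟩

end Extension

universe u

theorem uniqueProds_aux : ∀ c : ℕ, ∀ {G : Type u} [Group G] [Group.IsNilpotent G],
    Group.nilpotencyClass G ≤ c → (∀ γ : G, ∀ n : ℕ, 0 < n → γ ^ n = 1 → γ = 1) →
    UniqueProds G := by
  intro c
  induction c with
  | zero =>
    intro G _ _ hc _
    have hsub : Subsingleton G := by
      rw [← nilpotencyClass_zero_iff_subsingleton]; omega
    constructor
    intro A B hA hB
    obtain ⟨x, hx⟩ := hA
    obtain ⟨y, hy⟩ := hB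
    exact ⟨x, hx, y, hy, UniqueMul.of_subsingleton⟩
  | succ c ih =>
    intro G _ _ hc htf
    have hQc : Group.nilpotencyClass (G ⧸ Subgroup.center G) ≤ c := by
      rw [nilpotencyClass_quotient_center]; omega
    have hQ : UniqueProds (G ⧸ Subgroup.center G) := ih hQc (quotient_center_tf htf)
    have hN : UniqueProds (Subgroup.center G) := by
      open scoped IsMulCommutative in apply uniqueProds_of_tf_comm (G := Subgroup.center G)
      intro γ n hn hγ
      have : (γ : G) ^ n = 1 := by
        have := congrArg (Subtype.val) hγ
        simpa using this
      exact Subtype.ext (by simpa using htf γ n hn this)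
    exact uniqueProds_of_normal (Subgroup.center G) hN hQ

theorem twConv_final {Γ : Type*} [Group Γ] (hUP : UniqueProds Γ)
    (htf : ∀ γ : Γ, ∀ n : ℕ, 0 < n → γ ^ n = 1 → γ = 1)
    (σ : Γ → Γ → ℂ) (hσ : IsTwoCocycle σ)
    (a b : Γ → ℂ) (ha : (support a).Finite) (hb : (support b).Finite)
    (ha0 : a ≠ 0) (hb0 : b ≠ 0) :
    twConv σ a b ≠ 0 := by
  classical
  set A : Finset Γ := ha.toFinset with hAdef
  set B : Finset Γ := hb.toFinset with hBdef
  have hAne : A.Nonempty := by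
    obtain ⟨x, hx⟩ := Function.ne_iff.mp ha0
    exact ⟨x, ha.mem_toFinset.mpr (by simpa using hx)⟩
  have hBne : B.Nonempty := by
    obtain ⟨x, hx⟩ := Function.ne_iff.mp hb0
    exact ⟨x, hb.mem_toFinset.mpr (by simpa using hx)⟩
  obtain ⟨a0, ha0A, b0, hb0B, hu⟩ := hUP.uniqueMul_of_nonempty hAne hBne
  intro hzero
  have hval : twConv σ a b (a0 * b0) = 0 := by rw [hzero]; rfl
  have heq : twConv σ a b (a0 * b0)
      = σ a0 (a0⁻¹ * (a0 * b0)) * a a0 * b (a0⁻¹ * (a0 * b0)) := by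
    apply finsum_eq_single
    intro x hx
    by_cases hxa : a x = 0
    · simp [hxa]
    by_cases hxb : b (x⁻¹ * (a0 * b0)) = 0
    · simp [hxb]
    exfalso
    have hxA : x ∈ A := ha.mem_toFinset.mpr hxa
    have hxB : x⁻¹ * (a0 * b0) ∈ B := hb.mem_toFinset.mpr hxb
    have : x * (x⁻¹ * (a0 * b0)) = a0 * b0 := by group
    exact hx (hu hxA hxB this).1
  rw [hval] at heq
  have hb0' : b (a0⁻¹ * (a0 * b0)) = b b0 := by rw [inv_mul_cancel_left]
  rw [hb0'] at heq
  have hσne : σ a0 (a0⁻¹ * (a0 * b0)) ≠ 0 := by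
    intro h
    have := hσ.1 a0 (a0⁻¹ * (a0 * b0))
    rw [h] at this
    simp at this
  have haa : a a0 ≠ 0 := by
    have := ha.mem_toFinset.mp ha0A; simpa using this
  have hbb : b b0 ≠ 0 := by
    have := hb.mem_toFinset.mp hb0B; simpa using this
  rcases mul_eq_zero.mp heq.symm with h | h
  · rcases mul_eq_zero.mp h with h' | h'
    · exact hσne h'
    · exact haa h'
  · exact hbb h


/-- for a torsion-free nilpotent group `Γ` and any 2-cocycle `σ`, the twisted
group ring `ℂ(Γ,σ)` contains no nontrivial zero divisors. -/
theorem twConv_ne_zero_of_torsionFree_nilpotent {Γ : Type*} [Group Γ]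
    [Group.IsNilpotent Γ]
    (htf : ∀ γ : Γ, ∀ n : ℕ, 0 < n → γ ^ n = 1 → γ = 1)
    (σ : Γ → Γ → ℂ) (hσ : IsTwoCocycle σ)
    (a b : Γ → ℂ) (ha : (support a).Finite) (hb : (support b).Finite)
    (ha0 : a ≠ 0) (hb0 : b ≠ 0) :
    twConv σ a b ≠ 0 := by
  have hUP : UniqueProds Γ := uniqueProds_aux (Group.nilpotencyClass Γ) le_rfl htf
  exact twConv_final hUP htf σ hσ a b ha hb ha0 hb0
end

section
/- Let d ≥ 1 and σ a 2-cocycle on ℤ^d. Call a finitely supported a : ℤ^d → ℂ non-negative if a(i_1,…,i_d) = 0 whenever some i_k < 0, and for nonzero non-negative a define deg(a) as the maximum of i_1 + ⋯ + i_d over (i_1,…,i_d) ∈ supp(a). Then for all nonzero non-negative finitely supported a, b : ℤ^d → ℂ, the twisted convolution a *_σ b is nonzero, non-negative, and deg(a *_σ b) = deg(a) + deg(b). -/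
open Function

/-- The `σ`-twisted convolution on the (additive) group `ℤ^d`. -/
noncomputable def twConvZ {d : ℕ} (σ : (Fin d → ℤ) → (Fin d → ℤ) → ℂ)
    (a b : (Fin d → ℤ) → ℂ) : (Fin d → ℤ) → ℂ :=
  fun m => ∑ᶠ k, σ k (m - k) * a k * b (m - k)

/-- A 2-cocycle on the additive group `ℤ^d`. -/
def IsTwoCocycleZ {d : ℕ} (σ : (Fin d → ℤ) → (Fin d → ℤ) → ℂ) : Prop :=
  (∀ x y, ‖σ x y‖ = 1) ∧
    (∀ x y z, σ x y * σ (x + y) z = σ x (y + z) * σ y z) ∧ σ 0 0 = 1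

/-- `a : ℤ^d → ℂ` is non-negative if it vanishes at every point with a negative coordinate. -/
def NonNeg {d : ℕ} (a : (Fin d → ℤ) → ℂ) : Prop :=
  ∀ m : Fin d → ℤ, (∃ i, m i < 0) → a m = 0

/-- `D` is the degree of `a`, i.e. the maximum of `i_1 + ⋯ + i_d` over the support of `a`. -/
def IsDegree {d : ℕ} (a : (Fin d → ℤ) → ℂ) (D : ℤ) : Prop :=
  IsGreatest ((fun m : Fin d → ℤ => ∑ i, m i) '' support a) D

/-- If `x ≤ u` and `y ≤ v` lexicographically but `x + y = u + v`, then `x = u`. -/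
lemma lex_add_cancel_aux {d : ℕ} {x y u v : Fin d → ℤ}
    (hx : Pi.Lex (· < ·) (@fun _ => (· < ·)) x u ∨ x = u)
    (hy : Pi.Lex (· < ·) (@fun _ => (· < ·)) y v ∨ y = v)
    (h : x + y = u + v) : x = u := by
  rcases hx with hx | hx
  · exfalso
    obtain ⟨j, hj, hjlt⟩ := hx
    have hcoord : ∀ i, x i + y i = u i + v i := fun i => by
      have := congrFun h i; simpa using this
    have hvj : v j < y j := by have h1 := hcoord j; omega
    have hvi : ∀ i, i < j → v i = y i := by
      intro i hi
      have h1 := hcoord i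
      have h2 : x i = u i := hj i hi
      omega
    rcases hy with ⟨j', hj', hjlt'⟩ | hy
    · rcases lt_trichotomy j j' with hlt | rfl | hlt
      · have h1 : y j = v j := hj' j hlt; omega
      · omega
      · have h1 : v j' = y j' := hvi j' hlt
        omega
    · have h1 : y j = v j := congrFun hy j; omega
  · exact hx

/-- for nonzero non-negative finitely supported `a b : ℤ^d → ℂ`, the twisted
convolution `a *_σ b` is nonzero, non-negative, and `deg(a *_σ b) = deg a + deg b`. -/
theorem twConvZ_nonneg_deg {d : ℕ} (hd : 1 ≤ d)
    (σ : (Fin d → ℤ) → (Fin d → ℤ) → ℂ) (hσ : IsTwoCocycleZ σ)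
    (a b : (Fin d → ℤ) → ℂ) (ha : (support a).Finite) (hb : (support b).Finite)
    (ha0 : a ≠ 0) (hb0 : b ≠ 0) (haN : NonNeg a) (hbN : NonNeg b)
    (Da Db : ℤ) (hDa : IsDegree a Da) (hDb : IsDegree b Db) :
    twConvZ σ a b ≠ 0 ∧ NonNeg (twConvZ σ a b) ∧ IsDegree (twConvZ σ a b) (Da + Db) := by
  obtain ⟨habs, -, -⟩ := hσ
  have hσne : ∀ x y, σ x y ≠ 0 := by
    intro x y h
    have := habs x y
    rw [h] at this
    simp at this
  -- the convolution as a finite sum over the support of `a`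
  have key : ∀ m, twConvZ σ a b m = ∑ k ∈ ha.toFinset, σ k (m - k) * a k * b (m - k) := by
    intro m
    apply finsum_eq_finset_sum_of_support_subset
    intro k hk
    simp only [mem_support] at hk
    simp only [Set.Finite.coe_toFinset, mem_support]
    intro hak
    exact hk (by rw [hak]; ring)
  -- non-negativity
  have hN : NonNeg (twConvZ σ a b) := by
    rintro m ⟨i, hi⟩
    rw [key]
    apply Finset.sum_eq_zero
    intro k _
    by_cases h : k i < 0
    · rw [haN k ⟨i, h⟩]; ring
    · rw [hbN (m - k) ⟨i, by simp only [Pi.sub_apply]; omega⟩]; ring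
  -- upper bound on the degree
  have hub : ∀ m, twConvZ σ a b m ≠ 0 → ∑ i, m i ≤ Da + Db := by
    intro m hm
    rw [key] at hm
    obtain ⟨k, _, hne⟩ := Finset.exists_ne_zero_of_sum_ne_zero hm
    have hak : a k ≠ 0 := fun h => hne (by rw [h]; ring)
    have hbk : b (m - k) ≠ 0 := fun h => hne (by rw [h]; ring)
    have h1 : ∑ i, k i ≤ Da := hDa.2 (Set.mem_image_of_mem _ hak)
    have h2 : ∑ i, (m - k) i ≤ Db := hDb.2 (Set.mem_image_of_mem _ hbk)
    have h3 : ∑ i, m i = ∑ i, k i + ∑ i, (m - k) i := by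
      rw [← Finset.sum_add_distrib]
      exact Finset.sum_congr rfl fun i _ => by simp
    omega
  -- lex-maximal leading terms
  set A : Finset (Fin d → ℤ) := ha.toFinset.filter (fun k => ∑ i, k i = Da) with hA
  set B : Finset (Fin d → ℤ) := hb.toFinset.filter (fun k => ∑ i, k i = Db) with hB
  obtain ⟨ka, hka, hkaD⟩ := hDa.1
  obtain ⟨kb, hkb, hkbD⟩ := hDb.1
  have hAne : A.Nonempty :=
    ⟨ka, Finset.mem_filter.2 ⟨Set.Finite.mem_toFinset ha |>.2 hka, hkaD⟩⟩
  have hBne : B.Nonempty :=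
    ⟨kb, Finset.mem_filter.2 ⟨Set.Finite.mem_toFinset hb |>.2 hkb, hkbD⟩⟩
  letI : LinearOrder (Lex (Fin d → ℤ)) :=
    @Pi.Lex.linearOrder (Fin d) (fun _ => ℤ)
      inferInstance (inferInstanceAs (WellFoundedLT (Fin d))) (fun _ => inferInstance)
  obtain ⟨k₀, hk₀A, hk₀max⟩ := A.exists_max_image (fun k : Fin d → ℤ => toLex k) hAne
  obtain ⟨l₀, hl₀B, hl₀max⟩ := B.exists_max_image (fun k : Fin d → ℤ => toLex k) hBne
  have hk₀ : a k₀ ≠ 0 ∧ ∑ i, k₀ i = Da := by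
    obtain ⟨h1, h2⟩ := Finset.mem_filter.1 hk₀A
    exact ⟨(Set.Finite.mem_toFinset ha).1 h1, h2⟩
  have hl₀ : b l₀ ≠ 0 ∧ ∑ i, l₀ i = Db := by
    obtain ⟨h1, h2⟩ := Finset.mem_filter.1 hl₀B
    exact ⟨(Set.Finite.mem_toFinset hb).1 h1, h2⟩
  have lexle : ∀ {x u : Fin d → ℤ}, toLex x ≤ toLex u →
      Pi.Lex (· < ·) (@fun _ => (· < ·)) x u ∨ x = u := by
    intro x u h
    rcases h.lt_or_eq with h | h
    · exact Or.inl h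
    · exact Or.inr (toLex.injective h)
  set m₀ : Fin d → ℤ := k₀ + l₀ with hm₀
  clear_value m₀
  have hm₀sum : ∑ i, m₀ i = Da + Db := by
    rw [hm₀, ← hk₀.2, ← hl₀.2, ← Finset.sum_add_distrib]
    exact Finset.sum_congr rfl fun i _ => by simp
  -- the value at the leading point
  have hval : twConvZ σ a b m₀ = σ k₀ l₀ * a k₀ * b l₀ := by
    rw [key]
    rw [Finset.sum_eq_single k₀]
    · rw [hm₀]; rw [add_sub_cancel_left]
    · intro k hkS hkne
      by_contra hterm
      have hak : a k ≠ 0 := fun h => hterm (by rw [h]; ring)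
      have hbk : b (m₀ - k) ≠ 0 := fun h => hterm (by rw [h]; ring)
      have h1 : ∑ i, k i ≤ Da := hDa.2 (Set.mem_image_of_mem _ hak)
      have h2 : ∑ i, (m₀ - k) i ≤ Db := hDb.2 (Set.mem_image_of_mem _ hbk)
      have h3 : ∑ i, m₀ i = ∑ i, k i + ∑ i, (m₀ - k) i := by
        rw [← Finset.sum_add_distrib]
        exact Finset.sum_congr rfl fun i _ => by simp
      have hkDa : ∑ i, k i = Da := by linarith
      have hkDb : ∑ i, (m₀ - k) i = Db := by linarith
      have hkA : k ∈ A :=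
        Finset.mem_filter.2 ⟨Set.Finite.mem_toFinset ha |>.2 hak, hkDa⟩
      have hkB : m₀ - k ∈ B :=
        Finset.mem_filter.2 ⟨Set.Finite.mem_toFinset hb |>.2 hbk, hkDb⟩
      have := lex_add_cancel_aux (lexle (hk₀max k hkA)) (lexle (hl₀max _ hkB))
        (show k + (m₀ - k) = k₀ + l₀ by rw [add_sub_cancel, hm₀])
      exact hkne this
    · intro h
      exact absurd (Set.Finite.mem_toFinset ha |>.2 hk₀.1) h
  have hne0 : twConvZ σ a b m₀ ≠ 0 := by
    rw [hval]
    exact mul_ne_zero (mul_ne_zero (hσne _ _) hk₀.1) hl₀.1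
  refine ⟨fun h => hne0 (by rw [h]; rfl), hN, ⟨⟨m₀, hne0, hm₀sum⟩, ?_⟩⟩
  rintro x ⟨m, hm, rfl⟩
  exact hub m hm
end

section
/- Let G be a second-countable locally compact group with left Haar measure, σ a measurable 2-cocycle on G with |σ| ≡ 1, and Γ ≤ G a discrete subgroup with Borel fundamental domain Ω ⊆ G (so G is the disjoint union of the sets γΩ, γ ∈ Γ). Let H_Ω ⊆ L²(G) be the closed subspace of functions essentially supported in Ω, and let (e_i)_{i∈ℕ} be an orthonormal basis of H_Ω. Then the family (λ_G^σ(γ) e_i)_{γ∈Γ, i∈ℕ} is an orthonormal basis of L²(G). -/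
open MeasureTheory Function
open scoped Classical

/-- let `Γ ≤ G` be a discrete subgroup with Borel fundamental domain `Ω`, let
`H_Ω ⊆ L²(G)` be the subspace of functions (essentially) supported in `Ω`, and let
`(e_i)_{i ∈ ℕ}` be an orthonormal basis of `H_Ω`. Then the twisted translates
`(λ_G^σ(γ) e_i)_{γ ∈ Γ, i ∈ ℕ}` form an orthonormal basis of `L²(G)`: they are orthonormal
and total. -/
theorem twisted_translates_orthonormal_basis
    {G : Type*} [Group G] [TopologicalSpace G] [IsTopologicalGroup G]
    [LocallyCompactSpace G] [SecondCountableTopology G]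
    [MeasurableSpace G] [BorelSpace G]
    (μ : Measure G) [μ.IsHaarMeasure]
    (σ : G → G → ℂ) (hσmeas : Measurable fun p : G × G => σ p.1 p.2)
    (hσabs : ∀ x y, ‖σ x y‖ = 1)
    (hσcoc : ∀ x y z, σ x y * σ (x * y) z = σ x (y * z) * σ y z)
    (hσe : σ 1 1 = 1)
    (Γ : Subgroup G) [DiscreteTopology Γ]
    (Ω : Set G) (hΩm : MeasurableSet Ω)
    (hdisj : Pairwise fun γ γ' : Γ =>
      Disjoint ((fun x => (γ : G) * x) '' Ω) ((fun x => (γ' : G) * x) '' Ω))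
    (hcover : (⋃ γ : Γ, (fun x => (γ : G) * x) '' Ω) = Set.univ)
    (e : ℕ → G → ℂ) (he2 : ∀ i, MemLp (e i) 2 μ)
    (hesupp : ∀ i, ∀ᵐ x ∂μ, x ∉ Ω → e i x = 0)
    (heon : ∀ i j, ∫ x, (starRingEnd ℂ) (e i x) * e j x ∂μ = if i = j then 1 else 0)
    (hetotal : ∀ f : G → ℂ, MemLp f 2 μ → (∀ᵐ x ∂μ, x ∉ Ω → f x = 0) →
      (∀ i, ∫ x, (starRingEnd ℂ) (e i x) * f x ∂μ = 0) → f =ᵐ[μ] 0) :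
    (∀ (γ γ' : Γ) (i j : ℕ),
      ∫ x, (starRingEnd ℂ) (σ (γ : G) ((γ : G)⁻¹ * x) * e i ((γ : G)⁻¹ * x)) *
        (σ (γ' : G) ((γ' : G)⁻¹ * x) * e j ((γ' : G)⁻¹ * x)) ∂μ
        = if γ = γ' ∧ i = j then 1 else 0) ∧
    (∀ f : G → ℂ, MemLp f 2 μ →
      (∀ (γ : Γ) (i : ℕ),
        ∫ x, (starRingEnd ℂ) (σ (γ : G) ((γ : G)⁻¹ * x) * e i ((γ : G)⁻¹ * x)) * f x ∂μ = 0) →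
      f =ᵐ[μ] 0) := by
  -- basic facts
  have hσne : ∀ x y, σ x y ≠ 0 := by
    intro x y h
    have := hσabs x y
    rw [h] at this; simp at this
  have hσconj : ∀ x y, (starRingEnd ℂ) (σ x y) * σ x y = 1 := by
    intro x y
    rw [mul_comm, Complex.mul_conj, Complex.normSq_eq_norm_sq, hσabs]
    norm_num
  -- translation quasi-measure-preserving
  have hqmp : ∀ g : G, Measure.QuasiMeasurePreserving (fun x => g * x) μ μ :=
    fun g => (measurePreserving_mul_left μ g).quasiMeasurePreserving
  have haeshift : ∀ (g : G) (P : G → Prop), (∀ᵐ x ∂μ, P x) → ∀ᵐ x ∂μ, P (g * x) :=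
    fun g P hP => (hqmp g).ae hP
  -- membership in translated fundamental domain
  have hmem : ∀ (g x : G), x ∈ (fun y => g * y) '' Ω ↔ g⁻¹ * x ∈ Ω := by
    intro g x
    constructor
    · rintro ⟨y, hy, rfl⟩; simpa using hy
    · intro h; exact ⟨g⁻¹ * x, h, by simp⟩
  constructor
  · -- orthonormality
    intro γ γ' i j
    by_cases hγ : γ = γ'
    · subst hγ
      have hsub := integral_mul_left_eq_self
        (μ := μ) (fun x => (starRingEnd ℂ) (σ (γ : G) ((γ : G)⁻¹ * x) * e i ((γ : G)⁻¹ * x)) *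
          (σ (γ : G) ((γ : G)⁻¹ * x) * e j ((γ : G)⁻¹ * x))) (γ : G)
      rw [← hsub]
      have : ∀ y : G, (starRingEnd ℂ) (σ (γ : G) ((γ : G)⁻¹ * ((γ : G) * y)) *
          e i ((γ : G)⁻¹ * ((γ : G) * y))) *
          (σ (γ : G) ((γ : G)⁻¹ * ((γ : G) * y)) * e j ((γ : G)⁻¹ * ((γ : G) * y)))
          = (starRingEnd ℂ) (e i y) * e j y := by
        intro y
        rw [inv_mul_cancel_left, map_mul]
        have h1 := hσconj (γ : G) y
        ring_nf
        calc (starRingEnd ℂ) (σ (γ:G) y) * (starRingEnd ℂ) (e i y) * σ (γ:G) y * e j y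
            = ((starRingEnd ℂ) (σ (γ:G) y) * σ (γ:G) y) * ((starRingEnd ℂ) (e i y) * e j y) := by
              ring
          _ = (starRingEnd ℂ) (e i y) * e j y := by rw [h1, one_mul]
      simp only [this, heon i j]
      simp
    · -- disjoint supports
      have hd := hdisj (show γ ≠ γ' from hγ)
      have h1 : ∀ᵐ x ∂μ, (γ : G)⁻¹ * x ∉ Ω → e i ((γ : G)⁻¹ * x) = 0 :=
        haeshift ((γ : G)⁻¹) (fun y => y ∉ Ω → e i y = 0) (hesupp i)
      have h2 : ∀ᵐ x ∂μ, (γ' : G)⁻¹ * x ∉ Ω → e j ((γ' : G)⁻¹ * x) = 0 :=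
        haeshift ((γ' : G)⁻¹) (fun y => y ∉ Ω → e j y = 0) (hesupp j)
      have hzero : ∀ᵐ x ∂μ, (starRingEnd ℂ) (σ (γ : G) ((γ : G)⁻¹ * x) *
          e i ((γ : G)⁻¹ * x)) * (σ (γ' : G) ((γ' : G)⁻¹ * x) * e j ((γ' : G)⁻¹ * x)) = 0 := by
        filter_upwards [h1, h2] with x hx1 hx2
        by_cases hmem1 : (γ : G)⁻¹ * x ∈ Ω
        · have hnot : (γ' : G)⁻¹ * x ∉ Ω := by
            intro hmem2
            exact Set.disjoint_left.mp hd ((hmem (γ : G) x).mpr hmem1)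
              ((hmem (γ' : G) x).mpr hmem2)
          rw [hx2 hnot]; ring
        · rw [hx1 hmem1]; simp
      rw [integral_congr_ae hzero, integral_zero]
      have : ¬(γ = γ' ∧ i = j) := fun h => hγ h.1
      simp [this]
  · -- totality
    intro f hf horth
    -- for each γ, the "restricted, untwisted translate" of f is orthogonal to all e i
    have key : ∀ γ : Γ, ∀ᵐ x ∂μ, (γ : G)⁻¹ * x ∈ Ω → f x = 0 := by
      intro γ
      set g : G → ℂ := Ω.indicator (fun y => (starRingEnd ℂ) (σ (γ : G) y) * f ((γ : G) * y))
        with hg_def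
      -- f ∘ (γ * ·) is in L²
      have hfγ : MemLp (fun y => f ((γ : G) * y)) 2 μ := by
        have hmap := (measurePreserving_mul_left μ (γ : G)).map_eq
        have hf' : MemLp f 2 (Measure.map (fun y => (γ : G) * y) μ) := by rw [hmap]; exact hf
        have := (memLp_map_measure_iff (by rw [hmap]; exact hf.aestronglyMeasurable)
          (measurable_const_mul (γ : G)).aemeasurable).mp hf'
        exact this
      have hσγmeas : Measurable fun y => σ (γ : G) y :=
        hσmeas.comp (measurable_prodMk_left)
      have hsm : AEStronglyMeasurable
          (fun y => (starRingEnd ℂ) (σ (γ : G) y) * f ((γ : G) * y)) μ := by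
        exact ((Complex.continuous_conj.measurable.comp hσγmeas).aestronglyMeasurable).mul
          (hf.aestronglyMeasurable.comp_quasiMeasurePreserving (hqmp (γ : G)))
      have hg2 : MemLp g 2 μ := by
        apply MemLp.indicator hΩm
        apply hfγ.of_le hsm
        filter_upwards with y
        simp only [norm_mul]
        rw [RCLike.norm_conj]
        rw [hσabs, one_mul]
      have hgsupp : ∀ᵐ x ∂μ, x ∉ Ω → g x = 0 := by
        filter_upwards with x hx
        simp [hg_def, Set.indicator_of_notMem hx]
      have hgorth : ∀ i, ∫ x, (starRingEnd ℂ) (e i x) * g x ∂μ = 0 := by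
        intro i
        have hsub := integral_mul_left_eq_self
          (μ := μ) (fun x => (starRingEnd ℂ) (σ (γ : G) ((γ : G)⁻¹ * x) *
            e i ((γ : G)⁻¹ * x)) * f x) (γ : G)
        have hsupp' := hesupp i
        have : ∫ x, (starRingEnd ℂ) (e i x) * g x ∂μ
            = ∫ y, (starRingEnd ℂ) (σ (γ : G) ((γ : G)⁻¹ * ((γ : G) * y)) *
              e i ((γ : G)⁻¹ * ((γ : G) * y))) * f ((γ : G) * y) ∂μ := by
          apply integral_congr_ae
          filter_upwards [hsupp'] with y hy
          rw [inv_mul_cancel_left]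
          by_cases hyΩ : y ∈ Ω
          · simp only [hg_def, Set.indicator_of_mem hyΩ, map_mul]; ring
          · rw [hy hyΩ, hg_def, Set.indicator_of_notMem hyΩ]; simp
        rw [this, hsub, horth γ i]
      have hgz := hetotal g hg2 hgsupp hgorth
      -- g = 0 a.e. means f (γ y) = 0 for a.e. y ∈ Ω
      have hfz : ∀ᵐ y ∂μ, y ∈ Ω → f ((γ : G) * y) = 0 := by
        filter_upwards [hgz] with y hy hyΩ
        rw [hg_def] at hy
        simp only [Set.indicator_of_mem hyΩ, Pi.zero_apply] at hy
        rcases mul_eq_zero.mp hy with h | h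
        · exact absurd h (by simpa using hσne (γ : G) y)
        · exact h
      -- shift back
      have := haeshift ((γ : G)⁻¹) (fun y => y ∈ Ω → f ((γ : G) * y) = 0) hfz
      filter_upwards [this] with x hx hxΩ
      have := hx hxΩ
      rwa [mul_inv_cancel_left] at this
    have hΓcount : Countable Γ := by
      have : TopologicalSpace.SeparableSpace Γ := by infer_instance
      exact TopologicalSpace.separableSpace_iff_countable.mp this
    have hall : ∀ᵐ x ∂μ, ∀ γ : Γ, (γ : G)⁻¹ * x ∈ Ω → f x = 0 :=
      (ae_all_iff).mpr key
    filter_upwards [hall] with x hx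
    have hxmem : x ∈ ⋃ γ : Γ, (fun y => (γ : G) * y) '' Ω := by rw [hcover]; trivial
    obtain ⟨s, ⟨γ, rfl⟩, hxs⟩ := hxmem
    exact hx γ ((hmem (γ : G) x).mp hxs)
end
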